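/- For any lacunary sequence $\{t_j\}$ of positive reals with $t_1 \ge 2$ satisfying $t_{j+1}/t_j \ge 1 + 1/M$ for all $j$ (with $M \ge 8$), there exists a real number $\alpha$ such that $\|\alpha t_j\| \ge \frac{1}{2^{11} M \log M}$ for all $j \in \mathbb{N}$, where $\|x\|$ denotes the distance from $x$ to the nearest integer. -/

import Mathlib

namespace PeresSchlagAux

/-- children of a set of dyadic indices, refining by `d` extra levels -/
def child (d : ℕ) (S : Finset ℕ) : Finset ℕ :=
  S.biUnion fun k => (Finset.range (2 ^ d)).image fun r => k * 2 ^ d + r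

/-- `k` indexes a dyadic interval at level `N` avoiding the `ε`-neighbourhoods
of the rationals `a / T`. -/
def Good (ε T : ℝ) (N : ℕ) (k : ℕ) : Prop :=
  ∀ x ∈ Set.Icc ((k : ℝ) / 2 ^ N) (((k : ℝ) + 1) / 2 ^ N), ∀ a : ℤ, ε ≤ |T * x - a|

open Classical in
/-- the Peres–Schlag surviving dyadic intervals after `j` steps -/
noncomputable def SS (t : ℕ → ℝ) (ε : ℝ) (n : ℕ → ℕ) : ℕ → Finset ℕ
  | 0 => {0}
  | j + 1 => (child (n (j + 1) - n j) (SS t ε n j)).filter (Good ε (t (j + 1)) (n (j + 1)))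

/-- the union of the surviving intervals -/
def E (t : ℕ → ℝ) (ε : ℝ) (n : ℕ → ℕ) (j : ℕ) : Set ℝ :=
  ⋃ k ∈ SS t ε n j, Set.Icc ((k : ℝ) / 2 ^ n j) (((k : ℝ) + 1) / 2 ^ n j)

lemma card_child (d : ℕ) (S : Finset ℕ) : (child d S).card = S.card * 2 ^ d := by
  rw [child, Finset.card_biUnion]
  · rw [Finset.sum_congr rfl (fun k _ => ?_), Finset.sum_const, smul_eq_mul]
    rw [Finset.card_image_of_injective _ (fun a b h => by omega), Finset.card_range]
  · intro x _ y _ hxy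
    rw [Function.onFun, Finset.disjoint_left]
    rintro v hv hv'
    simp only [Finset.mem_image, Finset.mem_range] at hv hv'
    obtain ⟨r, hr, rfl⟩ := hv
    obtain ⟨r', hr', h⟩ := hv'
    have hp : 0 < 2 ^ d := Nat.pow_pos (n := d) (by norm_num)
    have e1 : (r + x * 2 ^ d) / 2 ^ d = x := by
      rw [Nat.add_mul_div_right _ _ hp, Nat.div_eq_of_lt hr]; omega
    have e2 : (r' + y * 2 ^ d) / 2 ^ d = y := by
      rw [Nat.add_mul_div_right _ _ hp, Nat.div_eq_of_lt hr']; omega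
    apply hxy
    rw [← e1, ← e2]
    congr 1
    omega

/-- a child dyadic interval is contained in its parent -/
lemma child_subset_parent (N d k r : ℕ) (hr : r < 2 ^ d) :
    Set.Icc (((k * 2 ^ d + r : ℕ) : ℝ) / 2 ^ (N + d)) (((k * 2 ^ d + r : ℕ) + 1 : ℝ) / 2 ^ (N + d))
      ⊆ Set.Icc ((k : ℝ) / 2 ^ N) (((k : ℝ) + 1) / 2 ^ N) := by
  have h2d : (0:ℝ) < 2 ^ d := by positivity
  have h2N : (0:ℝ) < 2 ^ N := by positivity
  apply Set.Icc_subset_Icc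
  · rw [pow_add, div_le_div_iff₀ h2N (by positivity)]
    push_cast
    nlinarith [h2d, h2N]
  · rw [pow_add, div_le_div_iff₀ (by positivity) h2N]
    have : (r : ℝ) + 1 ≤ 2 ^ d := by exact_mod_cast hr
    push_cast
    nlinarith [h2N]

/-- counting naturals in a real window of length `c` -/
lemma card_nat_window (S : Finset ℕ) (lo c : ℝ) (hc : 0 ≤ c)
    (h : ∀ k ∈ S, lo ≤ (k : ℝ) ∧ (k : ℝ) ≤ lo + c) : S.card ≤ ⌊c⌋₊ + 1 := by
  rcases S.eq_empty_or_nonempty with rfl | hS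
  · simp
  have hk0 := S.min'_mem hS
  set k0 := S.min' hS with hk0def
  have hsub : S ⊆ Finset.Icc k0 (k0 + ⌊c⌋₊) := by
    intro k hk
    rw [Finset.mem_Icc]
    refine ⟨S.min'_le k hk, ?_⟩
    have h1 := (h k hk).2
    have h2 := (h k0 hk0).1
    have hkk : (k : ℝ) ≤ (k0 : ℝ) + c := by linarith
    have : (k - k0 : ℕ) ≤ ⌊c⌋₊ := by
      apply Nat.le_floor
      have : k0 ≤ k ∨ k < k0 := le_or_gt k0 k
      rcases this with h' | h'
      · push_cast [Nat.cast_sub h']; linarith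
      · simp [Nat.sub_eq_zero_of_le h'.le]; linarith [hc]
    omega
  calc S.card ≤ (Finset.Icc k0 (k0 + ⌊c⌋₊)).card := Finset.card_le_card hsub
    _ = ⌊c⌋₊ + 1 := by rw [Nat.card_Icc]; omega

/-- counting integers in a real window of length `c` -/
lemma card_int_window (S : Finset ℤ) (lo c : ℝ) (hc : 0 ≤ c)
    (h : ∀ a ∈ S, lo ≤ (a : ℝ) ∧ (a : ℝ) ≤ lo + c) : (S.card : ℝ) ≤ c + 1 := by
  rcases S.eq_empty_or_nonempty with rfl | hS
  · simpa using by linarith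
  have ha0 := S.min'_mem hS
  set a0 := S.min' hS with ha0def
  have hsub : S ⊆ Finset.Icc a0 (a0 + ⌊c⌋) := by
    intro a ha
    rw [Finset.mem_Icc]
    refine ⟨S.min'_le a ha, ?_⟩
    have h1 := (h a ha).2
    have h2 := (h a0 ha0).1
    have : (a : ℝ) ≤ (a0 : ℝ) + c := by linarith
    have : a - a0 ≤ ⌊c⌋ := by
      apply Int.le_floor.2; push_cast; linarith
    omega
  have hcard : S.card ≤ (Finset.Icc a0 (a0 + ⌊c⌋)).card := Finset.card_le_card hsub
  have hIcc : (Finset.Icc a0 (a0 + ⌊c⌋)).card = (⌊c⌋ + 1).toNat := by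
    rw [Int.card_Icc]; ring_nf
  rw [hIcc] at hcard
  have h3 : ((⌊c⌋ + 1).toNat : ℝ) ≤ c + 1 := by
    rcases le_or_gt 0 (⌊c⌋ + 1) with h' | h'
    · have e : ((⌊c⌋ + 1).toNat : ℝ) = ((⌊c⌋ : ℝ) + 1) := by
        exact_mod_cast congrArg (Int.cast : ℤ → ℝ) (Int.toNat_of_nonneg h')
      rw [e]
      have := Int.floor_le c; linarith
    · rw [Int.toNat_of_nonpos h'.le]; simpa using by linarith
  calc (S.card : ℝ) ≤ ((⌊c⌋ + 1).toNat : ℝ) := by exact_mod_cast hcard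
    _ ≤ c + 1 := h3

lemma child_interval_subset_E (t : ℕ → ℝ) (ε : ℝ) (n : ℕ → ℕ) (hmono : Monotone n) (j : ℕ)
    {k : ℕ} (hk : k ∈ child (n (j + 1) - n j) (SS t ε n j)) :
    Set.Icc ((k : ℝ) / 2 ^ n (j + 1)) (((k : ℝ) + 1) / 2 ^ n (j + 1)) ⊆ E t ε n j := by
  intro x hx
  simp only [child, Finset.mem_biUnion, Finset.mem_image, Finset.mem_range] at hk
  obtain ⟨k', hk', r, hr, rfl⟩ := hk
  simp only [E, Set.mem_iUnion]
  refine ⟨k', hk', ?_⟩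
  have hN : n (j + 1) = n j + (n (j + 1) - n j) := by
    have := hmono (show j ≤ j + 1 by omega); omega
  have hsub := child_subset_parent (n j) (n (j + 1) - n j) k' r hr
  rw [← hN] at hsub
  exact hsub hx

lemma E_succ_subset (t : ℕ → ℝ) (ε : ℝ) (n : ℕ → ℕ) (hmono : Monotone n) (j : ℕ) :
    E t ε n (j + 1) ⊆ E t ε n j := by
  intro x hx
  simp only [E, Set.mem_iUnion] at hx
  obtain ⟨k, hk, hxk⟩ := hx
  simp only [SS, Finset.mem_filter] at hk
  exact child_interval_subset_E t ε n hmono j hk.1 hxk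

lemma E_subset (t : ℕ → ℝ) (ε : ℝ) (n : ℕ → ℕ) (hmono : Monotone n) {i j : ℕ} (hij : i ≤ j) :
    E t ε n j ⊆ E t ε n i := by
  induction j with
  | zero => simp_all
  | succ j ih =>
    rcases Nat.eq_or_lt_of_le hij with rfl | h
    · exact fun x hx => hx
    · exact fun x hx => ih (by omega) (E_succ_subset t ε n hmono j hx)

lemma E_nonempty {t : ℕ → ℝ} {ε : ℝ} {n : ℕ → ℕ} {j : ℕ} (h : (SS t ε n j).Nonempty) :
    (E t ε n j).Nonempty := by
  obtain ⟨k, hk⟩ := h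
  refine ⟨(k : ℝ) / 2 ^ n j, ?_⟩
  simp only [E, Set.mem_iUnion]
  exact ⟨k, hk, Set.left_mem_Icc.2 (by gcongr; linarith)⟩

lemma isCompact_E (t : ℕ → ℝ) (ε : ℝ) (n : ℕ → ℕ) (j : ℕ) : IsCompact (E t ε n j) :=
  Set.Finite.isCompact_biUnion (Finset.finite_toSet _) (fun k _ => isCompact_Icc)

lemma isClosed_E (t : ℕ → ℝ) (ε : ℝ) (n : ℕ → ℕ) (j : ℕ) : IsClosed (E t ε n j) :=
  Set.Finite.isClosed_biUnion (Finset.finite_toSet _) (fun k _ => isClosed_Icc)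

/-- every point of `E (j+1)` avoids the `ε`-neighbourhoods at scale `t (j+1)` -/
lemma good_of_mem_E (t : ℕ → ℝ) (ε : ℝ) (n : ℕ → ℕ) (j : ℕ) {x : ℝ}
    (hx : x ∈ E t ε n (j + 1)) : ∀ a : ℤ, ε ≤ |t (j + 1) * x - a| := by
  simp only [E, Set.mem_iUnion] at hx
  obtain ⟨k, hk, hxk⟩ := hx
  simp only [SS, Finset.mem_filter] at hk
  exact hk.2 x hxk

/-- The key counting step. -/
lemma key_step (t : ℕ → ℝ) (ε : ℝ) (n : ℕ → ℕ) (g j : ℕ)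
    (hmono : Monotone n)
    (hT : 0 < t (j + 1))
    (hεpos : 0 < ε) (hε1 : 2 * ε ≤ 1)
    (hcomp : 2 * ε * 2 ^ n (j + 1) ≤ t (j + 1))
    (hlag : 2 * 2 ^ n (j + 1 - g) ≤ t (j + 1))
    (hE : E t ε n j ⊆ E t ε n (j + 1 - g)) :
    (2 : ℝ) ^ (n (j + 1) - n j) * (SS t ε n j).card ≤
      (SS t ε n (j + 1)).card
        + 6 * (t (j + 1) / 2 ^ n (j + 1 - g)) * (SS t ε n (j + 1 - g)).card := by
  classical
  set T := t (j + 1) with hTdef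
  set N := n (j + 1) with hNdef
  set p := j + 1 - g with hpdef
  set P := n p with hPdef
  have h2N : (0 : ℝ) < 2 ^ N := by positivity
  have h2P : (0 : ℝ) < 2 ^ P := by positivity
  set R := child (N - n j) (SS t ε n j) with hRdef
  set K := R.filter (fun k => ¬ Good ε T N k) with hKdef
  have hSSeq : SS t ε n (j + 1) = R.filter (Good ε T N) := by simp only [SS]; rfl
  have h1 : (R.filter (Good ε T N)).card + K.card = R.card :=
    Finset.card_filter_add_card_filter_not _
  have hcards : R.card = (SS t ε n (j + 1)).card + K.card := by rw [hSSeq]; omega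
  have hcardR : R.card = (SS t ε n j).card * 2 ^ (N - n j) := card_child _ _
  have hbad : ∀ k ∈ K, ∃ x ∈ Set.Icc ((k : ℝ) / 2 ^ N) (((k : ℝ) + 1) / 2 ^ N),
      ∃ a : ℤ, |T * x - a| < ε := by
    intro k hk
    rw [hKdef, Finset.mem_filter] at hk
    have h2 := hk.2
    rw [Good] at h2
    push_neg at h2
    obtain ⟨x, hx, a, ha⟩ := h2
    exact ⟨x, hx, a, by linarith [ha]⟩
  set F : ℕ → ℤ := fun k =>
    if h : ∃ x ∈ Set.Icc ((k : ℝ) / 2 ^ N) (((k : ℝ) + 1) / 2 ^ N),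
        ∃ a : ℤ, |T * x - a| < ε then h.choose_spec.2.choose else 0 with hFdef
  have hFspec : ∀ k ∈ K, ∃ x ∈ Set.Icc ((k : ℝ) / 2 ^ N) (((k : ℝ) + 1) / 2 ^ N),
      |T * x - F k| < ε := by
    intro k hk
    have h := hbad k hk
    rw [hFdef]
    simp only [dif_pos h]
    exact ⟨h.choose, h.choose_spec.1, h.choose_spec.2.choose_spec⟩
  -- Step A : each integer kills at most 3 intervals
  have hstepA : K.card ≤ 3 * (K.image F).card := by
    apply Finset.card_le_mul_card_image
    intro a ha
    have h3 : (3 : ℕ) = ⌊(2 : ℝ)⌋₊ + 1 := by norm_num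
    rw [h3]
    apply card_nat_window _ (2 ^ N * ((a : ℝ) - ε) / T - 1) 2 (by norm_num)
    intro k hk
    rw [Finset.mem_filter] at hk
    obtain ⟨hkK, hka⟩ := hk
    obtain ⟨x, hx, hxa⟩ := hFspec k hkK
    rw [hka] at hxa
    obtain ⟨hx1, hx2⟩ := hx
    have hxlo : (k : ℝ) ≤ x * 2 ^ N := by
      rw [div_le_iff₀ h2N] at hx1; linarith
    have hxhi : x * 2 ^ N ≤ (k : ℝ) + 1 := by
      rw [le_div_iff₀ h2N] at hx2; linarith
    have ha1 : (a : ℝ) - ε < T * x := by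
      have := abs_lt.1 hxa; linarith [this.2]
    have ha2 : T * x < (a : ℝ) + ε := by
      have := abs_lt.1 hxa; linarith [this.1]
    constructor
    · rw [sub_le_iff_le_add, div_le_iff₀ hT]
      have e1 : 2 ^ N * ((a : ℝ) - ε) < 2 ^ N * (T * x) :=
        mul_lt_mul_of_pos_left ha1 h2N
      have e2 : T * (x * 2 ^ N) ≤ T * ((k : ℝ) + 1) :=
        mul_le_mul_of_nonneg_left hxhi hT.le
      nlinarith [e1, e2]
    · have e2 : T * (k : ℝ) < 2 ^ N * ((a : ℝ) + ε) := by
        have := mul_lt_mul_of_pos_left ha2 h2N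
        nlinarith [mul_le_mul_of_nonneg_left hxlo hT.le]
      have e4 : ((k : ℝ) - 1) * T < 2 ^ N * ((a : ℝ) - ε) := by nlinarith [hcomp]
      have e5 : (k : ℝ) - 1 < 2 ^ N * ((a : ℝ) - ε) / T := (lt_div_iff₀ hT).2 e4
      linarith
  -- Step B : relate killed integers to surviving intervals at the lagged scale
  set A := K.image F with hAdef
  have hHit : ∀ a ∈ A, ∃ k' ∈ SS t ε n p,
      ∃ x ∈ Set.Icc ((k' : ℝ) / 2 ^ P) (((k' : ℝ) + 1) / 2 ^ P), |T * x - a| < ε := by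
    intro a ha
    rw [hAdef, Finset.mem_image] at ha
    obtain ⟨k, hkK, rfl⟩ := ha
    obtain ⟨x, hx, hxa⟩ := hFspec k hkK
    have hkR : k ∈ R := (Finset.mem_filter.1 (hKdef ▸ hkK)).1
    have hxEj : x ∈ E t ε n j := child_interval_subset_E t ε n hmono j (hRdef ▸ hkR) hx
    have hxEp : x ∈ E t ε n p := hE hxEj
    simp only [E, Set.mem_iUnion] at hxEp
    obtain ⟨k', hk', hxk'⟩ := hxEp
    exact ⟨k', hk', x, hxk', hxa⟩
  set G : ℤ → ℕ := fun a =>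
    if h : ∃ k' ∈ SS t ε n p,
        ∃ x ∈ Set.Icc ((k' : ℝ) / 2 ^ P) (((k' : ℝ) + 1) / 2 ^ P), |T * x - a| < ε
    then h.choose else 0 with hGdef
  have hGspec : ∀ a ∈ A, G a ∈ SS t ε n p ∧
      ∃ x ∈ Set.Icc (((G a : ℕ) : ℝ) / 2 ^ P) ((((G a : ℕ) : ℝ) + 1) / 2 ^ P),
        |T * x - a| < ε := by
    intro a ha
    have h := hHit a ha
    rw [hGdef]
    simp only [dif_pos h]
    exact ⟨h.choose_spec.1, h.choose_spec.2⟩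
  have hfiber : ∀ k' ∈ A.image G,
      ((A.filter (fun a => G a = k')).card : ℝ) ≤ 2 * (T / 2 ^ P) := by
    intro k' _
    have hwin : ∀ a ∈ A.filter (fun a => G a = k'),
        T * (k' : ℝ) / 2 ^ P - ε ≤ (a : ℝ) ∧
          (a : ℝ) ≤ T * (k' : ℝ) / 2 ^ P - ε + (T / 2 ^ P + 2 * ε) := by
      intro a ha
      rw [Finset.mem_filter] at ha
      obtain ⟨haA, hak⟩ := ha
      obtain ⟨-, x, hx, hxa⟩ := hGspec a haA
      rw [hak] at hx
      obtain ⟨hx1, hx2⟩ := hx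
      have habs := abs_lt.1 hxa
      have hTx1 : T * ((k' : ℝ) / 2 ^ P) ≤ T * x := mul_le_mul_of_nonneg_left hx1 hT.le
      have hTx2 : T * x ≤ T * (((k' : ℝ) + 1) / 2 ^ P) := mul_le_mul_of_nonneg_left hx2 hT.le
      constructor
      · have he : T * ((k' : ℝ) / 2 ^ P) = T * (k' : ℝ) / 2 ^ P := by ring
        rw [he] at hTx1
        linarith [habs.1]
      · have he : T * (((k' : ℝ) + 1) / 2 ^ P) = T * (k' : ℝ) / 2 ^ P + T / 2 ^ P := by ring
        rw [he] at hTx2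
        linarith [habs.2]
    have hcw := card_int_window (A.filter (fun a => G a = k'))
      (T * (k' : ℝ) / 2 ^ P - ε) (T / 2 ^ P + 2 * ε) (by positivity) hwin
    have hTP2 : 2 ≤ T / 2 ^ P := by
      rw [le_div_iff₀ h2P]; linarith
    linarith
  have hstepB : (A.card : ℝ) ≤ 2 * (T / 2 ^ P) * (SS t ε n p).card := by
    have hsum := Finset.card_eq_sum_card_image G A
    have hcast : (A.card : ℝ) = ∑ k' ∈ A.image G, ((A.filter (fun a => G a = k')).card : ℝ) := by
      rw [hsum]; push_cast; rfl
    rw [hcast]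
    calc ∑ k' ∈ A.image G, ((A.filter (fun a => G a = k')).card : ℝ)
        ≤ ∑ k' ∈ A.image G, 2 * (T / 2 ^ P) := Finset.sum_le_sum hfiber
      _ = (A.image G).card * (2 * (T / 2 ^ P)) := by rw [Finset.sum_const, nsmul_eq_mul]
      _ ≤ (SS t ε n p).card * (2 * (T / 2 ^ P)) := by
          apply mul_le_mul_of_nonneg_right _ (by positivity)
          have hsub : A.image G ⊆ SS t ε n p := by
            intro k' hk'
            rw [Finset.mem_image] at hk'
            obtain ⟨a, haA, rfl⟩ := hk'
            exact (hGspec a haA).1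
          exact_mod_cast Finset.card_le_card hsub
      _ = 2 * (T / 2 ^ P) * (SS t ε n p).card := by ring
  have hK : (K.card : ℝ) ≤ 6 * (T / 2 ^ P) * (SS t ε n p).card := by
    have hA3 : (K.card : ℝ) ≤ 3 * (A.card : ℝ) := by exact_mod_cast hstepA
    calc (K.card : ℝ) ≤ 3 * (A.card : ℝ) := hA3
      _ ≤ 3 * (2 * (T / 2 ^ P) * (SS t ε n p).card) := by
          apply mul_le_mul_of_nonneg_left hstepB (by norm_num)
      _ = 6 * (T / 2 ^ P) * (SS t ε n p).card := by ring
  have hfin : ((SS t ε n j).card : ℝ) * 2 ^ (N - n j)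
      = ((SS t ε n (j + 1)).card : ℝ) + (K.card : ℝ) := by
    have hc : ((R.card : ℕ) : ℝ) = ((SS t ε n (j + 1)).card : ℝ) + (K.card : ℝ) := by
      exact_mod_cast congrArg (Nat.cast : ℕ → ℝ) hcards
    rw [← hc, hcardR]; push_cast; ring
  calc (2 : ℝ) ^ (N - n j) * (SS t ε n j).card
      = ((SS t ε n j).card : ℝ) * 2 ^ (N - n j) := by ring
    _ = ((SS t ε n (j + 1)).card : ℝ) + (K.card : ℝ) := hfin
    _ ≤ ((SS t ε n (j + 1)).card : ℝ) + 6 * (T / 2 ^ P) * (SS t ε n p).card := by linarith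

/-- abstract decay lemma -/
lemma decay (μ : ℕ → ℝ) (g : ℕ) (hg : 1 ≤ g) (θ : ℝ) (hθ : 0 ≤ θ)
    (hgθ : (g : ℝ) * θ ≤ 1 / 4) (h0 : μ 0 = 1)
    (hnonneg : ∀ j, 0 ≤ μ j)
    (hanti : ∀ i j, i ≤ j → μ j ≤ μ i)
    (hrec : ∀ j, μ j - θ * μ (j + 1 - g) ≤ μ (j + 1)) :
    ∀ j, 0 < μ j := by
  have tele : ∀ a b : ℕ, μ a - (b : ℝ) * θ * μ (a + 1 - g) ≤ μ (a + b) := by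
    intro a b
    induction b with
    | zero => simp
    | succ b ih =>
      have h1 := hrec (a + b)
      have h2 : μ (a + b + 1 - g) ≤ μ (a + 1 - g) := hanti _ _ (by omega)
      have h3 : θ * μ (a + b + 1 - g) ≤ θ * μ (a + 1 - g) := mul_le_mul_of_nonneg_left h2 hθ
      have he : μ (a + (b + 1)) = μ (a + b + 1) := by ring_nf
      rw [he]
      push_cast
      nlinarith [h1, ih]
  have half : ∀ j, (1 / 2) * μ (j - g) ≤ μ j := by
    intro j
    induction j using Nat.strong_induction_on with
    | _ j ih =>
      rcases lt_or_ge j g with hj | hj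
      · have hjg : j - g = 0 := by omega
        have h1g : 1 - g = 0 := by omega
        have := tele 0 j
        rw [h1g] at this
        simp only [Nat.zero_add, h0] at this
        have hjθ : (j : ℝ) * θ ≤ (g : ℝ) * θ := by
          apply mul_le_mul_of_nonneg_right _ hθ
          exact_mod_cast hj.le
        rw [hjg, h0]
        linarith
      · have heq : j - g + g = j := by omega
        have := tele (j - g) g
        rw [heq] at this
        have hidx : j - g - g ≤ j - g + 1 - g := by omega
        have h2 : μ (j - g + 1 - g) ≤ μ (j - g - g) := hanti _ _ hidx
        have hih : (1 / 2) * μ (j - g - g) ≤ μ (j - g) := by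
          rcases Nat.eq_zero_or_pos j with rfl | hjpos
          · exact absurd hj (by omega)
          · exact ih (j - g) (by omega)
        have h3 : θ * ((g : ℝ) * μ (j - g + 1 - g)) ≤ θ * ((g : ℝ) * (2 * μ (j - g))) := by
          apply mul_le_mul_of_nonneg_left _ hθ
          apply mul_le_mul_of_nonneg_left _ (by positivity)
          linarith [h2, hih]
        have hnn := hnonneg (j - g)
        nlinarith [this, h3, hgθ, hnn]
  intro j
  induction j using Nat.strong_induction_on with
  | _ j ih =>
    rcases Nat.eq_zero_or_pos j with rfl | hjpos
    · rw [h0]; norm_num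
    · have h1 := half j
      have h2 : 0 < μ (j - g) := ih (j - g) (by omega)
      linarith

/-- dyadic bounds from the floor of `logb 2` -/
lemma pow_log2_bounds {X : ℝ} (hX : 1 ≤ X) :
    (2 : ℝ) ^ (⌊Real.logb 2 X⌋₊) ≤ X ∧ X < 2 ^ (⌊Real.logb 2 X⌋₊ + 1) := by
  have hXpos : (0 : ℝ) < X := by linarith
  set y := Real.logb 2 X with hy
  have hy0 : 0 ≤ y := Real.logb_nonneg (by norm_num) hX
  have h1 : (⌊y⌋₊ : ℝ) ≤ y := Nat.floor_le hy0
  have h2 : y < (⌊y⌋₊ : ℝ) + 1 := Nat.lt_floor_add_one y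
  have hXy : (2 : ℝ) ^ y = X := Real.rpow_logb (by norm_num) (by norm_num) hXpos
  constructor
  · calc (2 : ℝ) ^ (⌊y⌋₊ : ℕ) = (2 : ℝ) ^ ((⌊y⌋₊ : ℕ) : ℝ) := (Real.rpow_natCast 2 _).symm
      _ ≤ (2 : ℝ) ^ y := Real.rpow_le_rpow_of_exponent_le (by norm_num) h1
      _ = X := hXy
  · calc X = (2 : ℝ) ^ y := hXy.symm
      _ < (2 : ℝ) ^ (((⌊y⌋₊ : ℕ) : ℝ) + 1) := Real.rpow_lt_rpow_of_exponent_lt (by norm_num) h2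
      _ = (2 : ℝ) ^ ((((⌊y⌋₊ + 1 : ℕ)) : ℝ)) := by push_cast; ring_nf
      _ = (2 : ℝ) ^ (⌊y⌋₊ + 1 : ℕ) := Real.rpow_natCast 2 _

end PeresSchlagAux

open PeresSchlagAux

set_option maxHeartbeats 1000000 in
theorem peres_schlag_one_dim (M : ℝ) (hM : 8 ≤ M) (t : ℕ → ℝ)
    (hpos : ∀ j, 1 ≤ j → 0 < t j) (ht1 : 2 ≤ t 1)
    (hlac : ∀ j, 1 ≤ j → 1 + 1 / M ≤ t (j + 1) / t j) :
    ∃ α : ℝ, ∀ j, 1 ≤ j → ∀ a : ℤ,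
      1 / (2 ^ 11 * M * Real.log M) ≤ |α * t j - (a : ℝ)| := by
  have hM0 : (0:ℝ) < M := by linarith
  have hc1 : (0.6931471803:ℝ) < Real.log 2 := Real.log_two_gt_d9
  have hc2 : Real.log 2 < 0.6931471808 := Real.log_two_lt_d9
  have hc0 : (0:ℝ) < Real.log 2 := by linarith
  set L := Real.log M with hLdef
  have hL2 : 2 ≤ L := by
    have h8 : Real.log 8 ≤ L := by
      rw [hLdef]; exact Real.log_le_log (by norm_num) hM
    have h83 : Real.log 8 = 3 * Real.log 2 := by
      rw [show (8:ℝ) = 2 ^ 3 by norm_num, Real.log_pow]; push_cast; ring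
    linarith
  have hLpos : (0:ℝ) < L := by linarith
  have hden : (0:ℝ) < 2 ^ 11 * M * L := by positivity
  set ε := 1 / (2 ^ 11 * M * L) with hεdef
  have hεpos : 0 < ε := by rw [hεdef]; positivity
  set X := 2 ^ 10 * M * L with hXdef
  have hX1 : (1:ℝ) ≤ X := by rw [hXdef]; nlinarith
  set s := ⌊Real.logb 2 X⌋₊ with hsdef
  obtain ⟨hA, hB⟩ := pow_log2_bounds hX1
  have h2s : (0:ℝ) < 2 ^ s := by positivity
  have h2s1 : (1:ℝ) ≤ 2 ^ s := one_le_pow₀ (by norm_num)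
  have h2εs : 2 * ε * 2 ^ s ≤ 1 := by
    have he : 2 * ε * 2 ^ s = (2 * 2 ^ s) / (2 ^ 11 * M * L) := by rw [hεdef]; ring
    rw [he, div_le_one hden]
    have h211 : (2:ℝ)^11 = 2 * 2^10 := by norm_num
    nlinarith [hA]
  set g := ⌈M⌉₊ * (s + 2) with hgdef
  have hceilpos : 0 < ⌈M⌉₊ := Nat.ceil_pos.2 hM0
  have hg1 : 1 ≤ g := by
    have := Nat.mul_pos hceilpos (show 0 < s + 2 by omega)
    omega
  -- growth facts for t
  have hstep : ∀ i, 1 ≤ i → (1 + 1/M) * t i ≤ t (i + 1) := by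
    intro i hi
    have h := hlac i hi
    rw [le_div_iff₀ (hpos i hi)] at h
    linarith
  have hM1 : (0:ℝ) < 1 + 1/M := by positivity
  have htmono : ∀ i j, 1 ≤ i → i ≤ j → t i ≤ t j := by
    intro i j hi hij
    induction j, hij using Nat.le_induction with
    | base => exact le_refl _
    | succ j hj ih =>
      have htj : 0 < t j := hpos j (by omega)
      have h1 := hstep j (by omega)
      have : t j ≤ (1 + 1/M) * t j := by
        nlinarith [mul_pos (show (0:ℝ) < 1/M by positivity) htj]
      linarith
  have hgrow : ∀ i, 1 ≤ i → ∀ m, (1 + 1/M) ^ m * t i ≤ t (i + m) := by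
    intro i hi m
    induction m with
    | zero => simp
    | succ m ih =>
      have h1 := hstep (i + m) (by omega)
      have h2 : (1+1/M) * ((1+1/M)^m * t i) ≤ (1+1/M) * t (i+m) :=
        mul_le_mul_of_nonneg_left ih hM1.le
      calc (1+1/M)^(m+1) * t i = (1+1/M) * ((1+1/M)^m * t i) := by ring
        _ ≤ (1+1/M) * t (i+m) := h2
        _ ≤ t (i + m + 1) := h1
  have hbern : (2:ℝ) ≤ (1 + 1/M) ^ ⌈M⌉₊ := by
    have hinv : (0:ℝ) < 1/M := by positivity
    have h := one_add_mul_le_pow (a := 1/M) (by linarith : (-2:ℝ) ≤ 1/M) ⌈M⌉₊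
    have hceil : M ≤ (⌈M⌉₊:ℝ) := Nat.le_ceil M
    have h2 : (1:ℝ) ≤ (⌈M⌉₊:ℝ) * (1/M) := by
      rw [mul_one_div, le_div_iff₀ hM0, one_mul]
      exact hceil
    linarith
  -- dyadic levels
  set l : ℕ → ℕ := fun j => ⌊Real.logb 2 (t j)⌋₊ with hldef
  have htj1 : ∀ j, 1 ≤ j → (1:ℝ) ≤ t j := by
    intro j hj
    have := htmono 1 j le_rfl hj
    linarith
  have hlb : ∀ j, 1 ≤ j → (2:ℝ)^(l j) ≤ t j ∧ t j < 2^(l j + 1) := by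
    intro j hj
    exact pow_log2_bounds (htj1 j hj)
  set n : ℕ → ℕ := fun j => if j = 0 then 0 else l j + s with hndef
  have hn0 : n 0 = 0 := by simp [hndef]
  have hnsucc : ∀ j, 1 ≤ j → n j = l j + s := by
    intro j hj
    simp only [hndef]
    rw [if_neg (by omega)]
  have hnmono : Monotone n := by
    apply monotone_nat_of_le_succ
    intro j
    rcases Nat.eq_zero_or_pos j with rfl | hj
    · simp [hndef]
    · rw [hnsucc j hj, hnsucc (j+1) (by omega)]
      have hll : l j ≤ l (j+1) := by
        apply Nat.floor_le_floor
        exact (Real.logb_le_logb (by norm_num) (hpos j hj) (hpos (j+1) (by omega))).2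
          (htmono j (j+1) hj (by omega))
      omega
  -- the measure sequence
  set μ : ℕ → ℝ := fun j => ((SS t ε n j).card : ℝ) / 2 ^ (n j) with hμdef
  have hμ0 : μ 0 = 1 := by
    simp [hμdef, SS, hn0]
  have hμnn : ∀ j, 0 ≤ μ j := by
    intro j; rw [hμdef]; positivity
  have hpow_split : ∀ j, (2:ℝ)^(n (j+1)) = 2^(n j) * 2^(n (j+1) - n j) := by
    intro j
    rw [← pow_add]
    congr 1
    have := hnmono (show j ≤ j + 1 by omega)
    omega
  have hμanti1 : ∀ j, μ (j+1) ≤ μ j := by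
    intro j
    have hcard : (SS t ε n (j+1)).card ≤ (SS t ε n j).card * 2 ^ (n (j+1) - n j) := by
      calc (SS t ε n (j+1)).card ≤ (child (n (j+1) - n j) (SS t ε n j)).card := by
            classical
            simp only [SS]
            exact Finset.card_filter_le _ _
        _ = _ := card_child _ _
    have h1 : ((SS t ε n (j+1)).card : ℝ) ≤ ((SS t ε n j).card : ℝ) * 2 ^ (n (j+1) - n j) := by
      exact_mod_cast hcard
    have h2N : (0:ℝ) < 2^(n (j+1)) := by positivity
    simp only [hμdef]
    calc ((SS t ε n (j+1)).card : ℝ) / 2^(n (j+1))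
        ≤ ((SS t ε n j).card : ℝ) * 2 ^ (n (j+1) - n j) / 2^(n (j+1)) :=
          (div_le_div_iff_of_pos_right h2N).2 h1
      _ = ((SS t ε n j).card : ℝ) / 2^(n j) := by
          rw [hpow_split j]; field_simp
  have hμanti : ∀ i j, i ≤ j → μ j ≤ μ i := by
    intro i j hij
    exact antitone_nat_of_succ_le hμanti1 hij
  -- the recursion
  set θ : ℝ := 12 / 2 ^ s with hθdef
  have hθnn : 0 ≤ θ := by rw [hθdef]; positivity
  have hεhalf : 2 * ε ≤ 1 := by nlinarith [hεpos]
  have hrec : ∀ j, μ j - θ * μ (j + 1 - g) ≤ μ (j + 1) := by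
    intro j
    have hT : 0 < t (j+1) := hpos (j+1) (by omega)
    have hNj : n (j+1) = l (j+1) + s := hnsucc (j+1) (by omega)
    obtain ⟨hlo, hhi⟩ := hlb (j+1) (by omega)
    have hcomp : 2 * ε * 2 ^ n (j+1) ≤ t (j+1) := by
      rw [hNj, pow_add]
      have h1 : 2 * ε * (2^(l (j+1)) * 2^s) = (2 * ε * 2^s) * 2^(l (j+1)) := by ring
      rw [h1]
      calc (2*ε*2^s) * 2^(l (j+1)) ≤ 1 * 2^(l (j+1)) :=
            mul_le_mul_of_nonneg_right h2εs (by positivity)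
        _ = 2 ^ (l (j+1)) := one_mul _
        _ ≤ t (j+1) := hlo
    have hlag : 2 * 2 ^ n (j + 1 - g) ≤ t (j+1) := by
      rcases Nat.lt_or_ge j g with hjg | hjg
      · have hp0 : j + 1 - g = 0 := by omega
        rw [hp0, hn0, pow_zero]
        have := htmono 1 (j+1) le_rfl (by omega)
        linarith
      · have hp1 : 1 ≤ j + 1 - g := by omega
        have hnp : n (j+1-g) = l (j+1-g) + s := hnsucc _ hp1
        have hgrow' := hgrow (j+1-g) hp1 g
        rw [show j + 1 - g + g = j + 1 by omega] at hgrow'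
        have hpowg : (2:ℝ)^(s+2) ≤ (1+1/M)^g := by
          rw [hgdef, pow_mul]
          exact pow_le_pow_left₀ (by norm_num) hbern (s+2)
        have hlop : (2:ℝ)^(l (j+1-g)) ≤ t (j+1-g) := (hlb _ hp1).1
        have htp : 0 < t (j+1-g) := hpos _ hp1
        have e1 : (2:ℝ) * 2^(l (j+1-g) + s) = 2^(l (j+1-g) + s + 1) := by
          rw [pow_succ]; ring
        have e2 : (2:ℝ)^(s+2) * 2^(l (j+1-g)) = 2^(s + 2 + l (j+1-g)) := by
          rw [← pow_add]
        calc 2 * 2^(n (j+1-g)) = 2^(l (j+1-g) + s + 1) := by rw [hnp, e1]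
          _ ≤ (2:ℝ)^(s + 2 + l (j+1-g)) :=
              pow_le_pow_right₀ (by norm_num) (by omega)
          _ = (2:ℝ)^(s+2) * 2^(l (j+1-g)) := e2.symm
          _ ≤ (1+1/M)^g * t (j+1-g) := by
              apply mul_le_mul hpowg hlop (by positivity) (by positivity)
          _ ≤ t (j+1) := hgrow'
    have hEsub : E t ε n j ⊆ E t ε n (j+1-g) := E_subset t ε n hnmono (by omega)
    have hks := key_step t ε n g j hnmono hT hεpos hεhalf hcomp hlag hEsub
    have h2N : (0:ℝ) < 2^(n (j+1)) := by positivity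
    have h2P : (0:ℝ) < 2^(n (j+1-g)) := by positivity
    have e1 : μ j = ((2:ℝ)^(n (j+1) - n j) * (SS t ε n j).card) / 2^(n (j+1)) := by
      rw [hμdef]
      simp only
      rw [hpow_split j]
      rw [mul_comm ((2:ℝ)^(n j)), mul_div_mul_left _ _ (by positivity : (2:ℝ)^(n (j+1) - n j) ≠ 0)]
    have e3 : (6 * (t (j+1) / 2^(n (j+1-g))) * ((SS t ε n (j+1-g)).card : ℝ)) / 2^(n (j+1))
        = (6 * t (j+1) / 2^(n (j+1))) * μ (j+1-g) := by
      simp only [hμdef]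
      ring
    have hθbd : 6 * t (j+1) / 2^(n (j+1)) ≤ θ := by
      rw [hθdef, hNj, pow_add, div_le_div_iff₀ (by positivity) h2s]
      have h2l : (0:ℝ) < 2 ^ l (j+1) := by positivity
      have : t (j+1) ≤ 2 * 2 ^ (l (j+1)) := by
        rw [pow_succ] at hhi
        nlinarith [hhi]
      nlinarith [h2s, h2l, this]
    have hdiv : (2:ℝ)^(n (j+1) - n j) * (SS t ε n j).card / 2^(n (j+1)) ≤
        (((SS t ε n (j+1)).card : ℝ)
          + 6 * (t (j+1) / 2^(n (j+1-g))) * (SS t ε n (j+1-g)).card) / 2^(n (j+1)) :=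
      (div_le_div_iff_of_pos_right h2N).2 hks
    rw [← e1] at hdiv
    rw [add_div, e3] at hdiv
    have hμp : 0 ≤ μ (j+1-g) := hμnn _
    have : (6 * t (j+1) / 2^(n (j+1))) * μ (j+1-g) ≤ θ * μ (j+1-g) :=
      mul_le_mul_of_nonneg_right hθbd hμp
    have hm1 : ((SS t ε n (j+1)).card : ℝ) / 2^(n (j+1)) = μ (j+1) := by rw [hμdef]
    rw [hm1] at hdiv
    linarith
  -- the lag-times-loss bound
  have hsle : (s:ℝ) ≤ (10 * Real.log 2 + L + Real.log L) / Real.log 2 := by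
    have h1 : (s:ℝ) ≤ Real.logb 2 X := Nat.floor_le (Real.logb_nonneg (by norm_num) hX1)
    have h2 : Real.logb 2 X = Real.log X / Real.log 2 := by rw [Real.logb]
    have h3 : Real.log X = 10 * Real.log 2 + L + Real.log L := by
      rw [hXdef, Real.log_mul (by positivity) (ne_of_gt hLpos),
        Real.log_mul (by positivity) (ne_of_gt hM0), Real.log_pow]
      push_cast
      try rw [← hLdef]
      try ring
    rw [h2, h3] at h1
    exact h1
  have hlogL : Real.log L ≤ L - 1 := Real.log_le_sub_one_of_pos hLpos
  have hgθ : (g:ℝ) * θ ≤ 1/4 := by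
    have hgcast : (g:ℝ) = (⌈M⌉₊:ℝ) * ((s:ℝ) + 2) := by rw [hgdef]; push_cast; ring
    have hceil : (⌈M⌉₊:ℝ) ≤ M + 1 := (Nat.ceil_lt_add_one hM0.le).le
    have hceilnn : (0:ℝ) ≤ (⌈M⌉₊:ℝ) := by positivity
    have h2slb : 2^9 * M * L < (2:ℝ)^s := by
      have h1 : X < 2 * 2^s := by
        rw [pow_succ] at hB; linarith [hB]
      rw [hXdef] at h1
      nlinarith [h1]
    have hs2 : (s:ℝ) + 2 ≤ 12 + (2*L - 1)/Real.log 2 := by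
      have h4 : (10 * Real.log 2 + L + Real.log L)/Real.log 2 ≤ 10 + (2*L-1)/Real.log 2 := by
        rw [div_le_iff₀ hc0, add_mul, div_mul_cancel₀ _ (ne_of_gt hc0)]
        linarith
      linarith
    have hQ : 12*(M+1)*(12*Real.log 2 + 2*L - 1) ≤ 128*M*L*Real.log 2 := by
      nlinarith [mul_pos hM0 hLpos, mul_pos (mul_pos hM0 hLpos) hc0,
        mul_nonneg (sub_nonneg.2 hM) (sub_nonneg.2 hL2),
        mul_nonneg (mul_nonneg (sub_nonneg.2 hM) (sub_nonneg.2 hL2)) hc0.le,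
        mul_nonneg (sub_nonneg.2 hM) hc0.le, mul_nonneg (sub_nonneg.2 hL2) hc0.le]
    have hP : 12*(M+1)*(12 + (2*L-1)/Real.log 2) ≤ 128*M*L := by
      rw [show (12:ℝ)*(M+1)*(12 + (2*L-1)/Real.log 2)
          = (12*(M+1)*(12*Real.log 2 + 2*L-1))/Real.log 2 from by field_simp; ring]
      rw [div_le_iff₀ hc0]
      linarith [hQ]
    -- combine
    rw [hθdef, hgcast]
    have hform : (⌈M⌉₊:ℝ) * ((s:ℝ)+2) * (12/2^s) = (12*(⌈M⌉₊:ℝ)*((s:ℝ)+2))/2^s := by ring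
    rw [hform, div_le_iff₀ h2s]
    have hs2nn : (0:ℝ) ≤ (s:ℝ) + 2 := by positivity
    have hbound : 12*(⌈M⌉₊:ℝ)*((s:ℝ)+2) ≤ 12*(M+1)*(12 + (2*L-1)/Real.log 2) := by
      have h1 : (12:ℝ)*(⌈M⌉₊:ℝ)*((s:ℝ)+2) ≤ 12*(M+1)*((s:ℝ)+2) := by nlinarith
      have h2 : (12:ℝ)*(M+1)*((s:ℝ)+2) ≤ 12*(M+1)*(12 + (2*L-1)/Real.log 2) := by
        apply mul_le_mul_of_nonneg_left hs2 (by nlinarith)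
      linarith
    nlinarith [hP, h2slb, hbound]
  -- positivity of the measure, hence nonemptiness
  have hμpos := decay μ g hg1 θ hθnn hgθ hμ0 hμnn hμanti hrec
  have hSSne : ∀ j, (SS t ε n j).Nonempty := by
    intro j
    rcases (SS t ε n j).eq_empty_or_nonempty with he | hne
    · exfalso
      have := hμpos j
      rw [hμdef] at this
      simp only [he, Finset.card_empty, Nat.cast_zero, zero_div] at this
      exact lt_irrefl 0 this
    · exact hne
  have hinter := IsCompact.nonempty_iInter_of_sequence_nonempty_isCompact_isClosed (E t ε n)
      (fun j => E_succ_subset t ε n hnmono j) (fun j => E_nonempty (hSSne j))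
      (isCompact_E t ε n 0) (fun j => isClosed_E t ε n j)
  obtain ⟨α, hα⟩ := hinter
  refine ⟨α, ?_⟩
  intro j hj a
  have hαj : α ∈ E t ε n j := Set.mem_iInter.1 hα j
  obtain ⟨j', rfl⟩ : ∃ j', j = j' + 1 := ⟨j - 1, by omega⟩
  have hgood := good_of_mem_E t ε n j' hαj a
  calc (1:ℝ)/(2^11 * M * L) = ε := by rw [hεdef]
    _ ≤ |t (j'+1) * α - a| := hgood
    _ = |α * t (j'+1) - a| := by rw [mul_comm (t (j'+1)) α]
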